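/- If there exists a finite projective plane of order κ ≥ 2, then there exists a complete set of κ − 1 mutually projective Latin squares of order κ, i.e., κ − 1 pairwise distinct Latin squares of order κ, all with diagonal entries equal to the symbol 1, which are pairwise projective. -/
import Mathlib


/-- A finite geometry (finite linear space): any two distinct points lie on exactly one
common line, and every line contains at least two points. -/
def IsGeometry {P : Type*} (lines : Finset (Finset P)) : Prop :=
  (∀ p q : P, p ≠ q → ∃! ℓ, ℓ ∈ lines ∧ p ∈ ℓ ∧ q ∈ ℓ) ∧
  (∀ ℓ ∈ lines, 2 ≤ ℓ.card)

/-- No three of the four points `a, b, c, d` lie on a common line. -/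
def NoThreeCollinear {P : Type*} (lines : Finset (Finset P)) (a b c d : P) : Prop :=
  ∀ ℓ ∈ lines,
    ¬(a ∈ ℓ ∧ b ∈ ℓ ∧ c ∈ ℓ) ∧ ¬(a ∈ ℓ ∧ b ∈ ℓ ∧ d ∈ ℓ) ∧
    ¬(a ∈ ℓ ∧ c ∈ ℓ ∧ d ∈ ℓ) ∧ ¬(b ∈ ℓ ∧ c ∈ ℓ ∧ d ∈ ℓ)

/-- A finite projective plane of order κ. -/
def IsProjectivePlane {P : Type*} (lines : Finset (Finset P)) (κ : ℕ) : Prop :=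
  IsGeometry lines ∧
  (∀ ℓ₁ ∈ lines, ∀ ℓ₂ ∈ lines, ℓ₁ ≠ ℓ₂ → ∃ p, p ∈ ℓ₁ ∧ p ∈ ℓ₂) ∧
  (∃ a b c d : P, a ≠ b ∧ a ≠ c ∧ a ≠ d ∧ b ≠ c ∧ b ≠ d ∧ c ≠ d ∧
    NoThreeCollinear lines a b c d) ∧
  (∀ ℓ ∈ lines, ℓ.card = κ + 1)

/-- A Latin square of order κ: each symbol occurs exactly once in every row and
exactly once in every column. -/
def IsLatinSquare {κ : ℕ} (L : Fin κ → Fin κ → Fin κ) : Prop :=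
  (∀ i : Fin κ, Function.Bijective fun c => L i c) ∧
  (∀ c : Fin κ, Function.Bijective fun i => L i c)

/-- Two Latin squares are projective if for every row index `i` of the first and
every row index `j` of the second there is exactly one column where they agree. -/
def ProjectivePair {κ : ℕ} (L₁ L₂ : Fin κ → Fin κ → Fin κ) : Prop :=
  ∀ i j : Fin κ, ∃! c : Fin κ, L₁ i c = L₂ j c

/-- A finite projective plane of order κ ≥ 2 gives rise to a complete set of κ − 1
mutually projective Latin squares of order κ. -/
theorem plane_gives_mpls {κ : ℕ} (hκ : 2 ≤ κ) {P : Type*} [Fintype P]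
    (lines : Finset (Finset P)) (hplane : IsProjectivePlane lines κ) :
    ∃ Ls : Fin (κ - 1) → (Fin κ → Fin κ → Fin κ),
      Function.Injective Ls ∧
      (∀ s, IsLatinSquare (Ls s)) ∧
      (∀ s, ∀ i : Fin κ, Ls s i i = ⟨1, by omega⟩) ∧
      (∀ s t, s ≠ t → ProjectivePair (Ls s) (Ls t)) := by
  classical
  obtain ⟨⟨join, -⟩, meet, ⟨a, b, c0, d0, hab, hac, had, hbc, hbd, hcd, hno3⟩, cards⟩ := hplane
  have join' : ∀ p q : P, p ≠ q → ∃ ℓ, (ℓ ∈ lines ∧ p ∈ ℓ ∧ q ∈ ℓ) ∧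
      ∀ y, (y ∈ lines ∧ p ∈ y ∧ q ∈ y) → y = ℓ := join
  choose! J hJ hJu using join'
  have hJl : ∀ p q : P, p ≠ q → J p q ∈ lines := fun p q h => (hJ p q h).1
  have hJp : ∀ p q : P, p ≠ q → p ∈ J p q := fun p q h => (hJ p q h).2.1
  have hJq : ∀ p q : P, p ≠ q → q ∈ J p q := fun p q h => (hJ p q h).2.2
  clear hJ
  -- two distinct points lie on a unique line
  have lineU : ∀ ⦃ℓ : Finset P⦄, ℓ ∈ lines → ∀ ⦃ℓ' : Finset P⦄, ℓ' ∈ lines →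
      ∀ ⦃p q : P⦄, p ≠ q → p ∈ ℓ → q ∈ ℓ → p ∈ ℓ' → q ∈ ℓ' → ℓ = ℓ' :=
    fun ℓ hℓ ℓ' hℓ' p q hpq hp hq hp' hq' =>
      (hJu p q hpq ℓ ⟨hℓ, hp, hq⟩).trans (hJu p q hpq ℓ' ⟨hℓ', hp', hq'⟩).symm
  -- two distinct lines meet in a unique point
  have meetU : ∀ ℓ ∈ lines, ∀ ℓ' ∈ lines, ℓ ≠ ℓ' → ∃! p, p ∈ ℓ ∧ p ∈ ℓ' := by
    intro ℓ hℓ ℓ' hℓ' hne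
    obtain ⟨p, hp, hp'⟩ := meet ℓ hℓ ℓ' hℓ' hne
    refine ⟨p, ⟨hp, hp'⟩, fun y hy => ?_⟩
    by_contra hyp
    exact hne (lineU hℓ hℓ' hyp hy.1 hp hy.2 hp')
  have hPne : Nonempty P := ⟨a⟩
  have meetU' : ∀ ℓ, ℓ ∈ lines → ∀ ℓ', ℓ' ∈ lines → ℓ ≠ ℓ' →
      ∃ p, (p ∈ ℓ ∧ p ∈ ℓ') ∧ ∀ y, (y ∈ ℓ ∧ y ∈ ℓ') → y = p := meetU
  choose! M hM hMu using meetU'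
  have hMl : ∀ ℓ, ℓ ∈ lines → ∀ ℓ', ℓ' ∈ lines → ℓ ≠ ℓ' → M ℓ ℓ' ∈ ℓ :=
    fun ℓ h ℓ' h' hne => (hM ℓ h ℓ' h' hne).1
  have hMr : ∀ ℓ, ℓ ∈ lines → ∀ ℓ', ℓ' ∈ lines → ℓ ≠ ℓ' → M ℓ ℓ' ∈ ℓ' :=
    fun ℓ h ℓ' h' hne => (hM ℓ h ℓ' h' hne).2
  clear hM
  -- the line at infinity and the special line σ (through b)
  set linf : Finset P := J a b with hlinf_def
  have hlinfl : linf ∈ lines := hJl a b hab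
  have hainf : a ∈ linf := hJp a b hab
  have hbinf : b ∈ linf := hJq a b hab
  have hc0linf : c0 ∉ linf := fun h => (hno3 linf hlinfl).1 ⟨hainf, hbinf, h⟩
  set σ : Finset P := J b c0 with hσ_def
  have hσl : σ ∈ lines := hJl b c0 hbc
  have hbσ : b ∈ σ := hJp b c0 hbc
  have hc0σ : c0 ∈ σ := hJq b c0 hbc
  have haσ : a ∉ σ := fun h => (hno3 σ hσl).1 ⟨h, hbσ, hc0σ⟩
  have hσne : σ ≠ linf := fun h => hc0linf (h ▸ hc0σ)
  -- enumerate the affine points of σ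
  have cardD : (σ.erase b).card = κ := by
    rw [Finset.card_erase_of_mem hbσ, cards _ hσl]
    omega
  have cardE : ((linf.erase a).erase b).card = κ - 1 := by
    have hbe : b ∈ linf.erase a := Finset.mem_erase.mpr ⟨hab.symm, hbinf⟩
    rw [Finset.card_erase_of_mem hbe, Finset.card_erase_of_mem hainf, cards _ hlinfl]
    omega
  obtain ⟨one, hone⟩ : ∃ o : Fin κ, (o : ℕ) = 1 := ⟨⟨1, by omega⟩, rfl⟩
  obtain ⟨d, dInv, hdinj, hdmem, hdW, hdInv, hdInvd⟩ :
      ∃ (d : Fin κ → P) (dInv : P → Fin κ), Function.Injective d ∧ (∀ i, d i ∈ σ) ∧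
        (∀ i, d i ≠ b) ∧ (∀ z, z ∈ σ → z ≠ b → d (dInv z) = z) ∧ (∀ i, dInv (d i) = i) := by
    have eD := (σ.erase b).equivFinOfCardEq cardD
    refine ⟨fun i => (eD.symm i).1,
      fun z => if h : z ∈ σ.erase b then eD ⟨z, h⟩ else ⟨1, by omega⟩,
      ?_, ?_, ?_, ?_, ?_⟩
    · intro i j h
      have := eD.symm.injective (Subtype.ext h)
      exact this
    · exact fun i => (Finset.mem_erase.mp (eD.symm i).2).2
    · exact fun i => (Finset.mem_erase.mp (eD.symm i).2).1
    · intro z hz hzb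
      have h : z ∈ σ.erase b := Finset.mem_erase.mpr ⟨hzb, hz⟩
      simp only [dif_pos h, Equiv.symm_apply_apply]
    · intro i
      have h : (eD.symm i).1 ∈ σ.erase b := (eD.symm i).2
      simp only [dif_pos h]
      rw [show (⟨(eD.symm i).1, h⟩ : {x // x ∈ σ.erase b}) = eD.symm i from Subtype.ext rfl,
        Equiv.apply_symm_apply]
  obtain ⟨e, heinj, heinl, hea, heb⟩ :
      ∃ e : Fin (κ - 1) → P, Function.Injective e ∧ (∀ s, e s ∈ linf) ∧
        (∀ s, e s ≠ a) ∧ (∀ s, e s ≠ b) := by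
    have eE := ((linf.erase a).erase b).equivFinOfCardEq cardE
    refine ⟨fun s => (eE.symm s).1, fun s t h => eE.symm.injective (Subtype.ext h),
      fun s => ?_, fun s => ?_, fun s => ?_⟩
    · have := (eE.symm s).2
      exact (Finset.mem_erase.mp (Finset.mem_erase.mp this).2).2
    · have := (eE.symm s).2
      exact (Finset.mem_erase.mp (Finset.mem_erase.mp this).2).1
    · have := (eE.symm s).2
      exact (Finset.mem_erase.mp this).1
  -- basic point facts
  have hdl : ∀ i, d i ∉ linf := fun i h =>
    hσne (lineU hσl hlinfl (hdW i) (hdmem i) hbσ h hbinf)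
  have hes : ∀ s, e s ∉ σ := fun s h =>
    hσne (lineU hσl hlinfl (heb s) h hbσ (heinl s) hbinf)
  have hed : ∀ s i, e s ≠ d i := fun s i h => hdl i (h ▸ heinl s)
  have had' : ∀ i, a ≠ d i := fun i h => hdl i (h ▸ hainf)
  have hbd' : ∀ i, b ≠ d i := fun i h => hdW i h.symm
  -- the pencils of lines
  set Λ : Fin (κ - 1) → Fin κ → Finset P := fun s i => J (e s) (d i) with hΛ_def
  set col : Fin κ → Finset P := fun c => J a (d c) with hcol_def
  have hΛl : ∀ s i, Λ s i ∈ lines := fun s i => hJl _ _ (hed s i)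
  have heΛ : ∀ s i, e s ∈ Λ s i := fun s i => hJp _ _ (hed s i)
  have hdΛ : ∀ s i, d i ∈ Λ s i := fun s i => hJq _ _ (hed s i)
  have hcoll : ∀ c, col c ∈ lines := fun c => hJl _ _ (had' c)
  have hacol : ∀ c, a ∈ col c := fun c => hJp _ _ (had' c)
  have hdcol : ∀ c, d c ∈ col c := fun c => hJq _ _ (had' c)
  have hΛlinf : ∀ s i, Λ s i ≠ linf := fun s i h => hdl i (h ▸ hdΛ s i)
  have hcollinf : ∀ c, col c ≠ linf := fun c h => hdl c (h ▸ hdcol c)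
  have hWcol : ∀ c, b ∉ col c := fun c h =>
    hcollinf c (lineU (hcoll c) hlinfl hab.symm h (hacol c) hbinf hainf)
  have hecol : ∀ s c, e s ∉ col c := fun s c h =>
    hcollinf c (lineU (hcoll c) hlinfl (hea s) h (hacol c) (heinl s) hainf)
  have hΛcol : ∀ s i c, Λ s i ≠ col c := fun s i c h => hecol s c (h ▸ heΛ s i)
  have hΛΛ : ∀ {s t : Fin (κ - 1)} {i j : Fin κ}, e s ≠ e t → Λ s i ≠ Λ t j :=
    fun {s t i j} h hh =>
      hΛlinf s i (lineU (hΛl s i) hlinfl h (heΛ s i) (hh ▸ heΛ t j) (heinl s) (heinl t))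
  have hΛsame : ∀ {s : Fin (κ - 1)} {i j : Fin κ}, i ≠ j → Λ s i ≠ Λ s j :=
    fun {s i j} hij h =>
      hes s (lineU (hΛl s i) hσl (fun hd => hij (hdinj hd)) (hdΛ s i) (h ▸ hdΛ s j)
        (hdmem i) (hdmem j) ▸ heΛ s i)
  -- cells
  set pt : Fin (κ - 1) → Fin κ → Fin κ → P := fun s i c => M (Λ s i) (col c) with hpt_def
  have hptΛ : ∀ s i c, pt s i c ∈ Λ s i := fun s i c =>
    hMl _ (hΛl s i) _ (hcoll c) (hΛcol s i c)
  have hptcol : ∀ s i c, pt s i c ∈ col c := fun s i c =>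
    hMr _ (hΛl s i) _ (hcoll c) (hΛcol s i c)
  have hptuniq : ∀ s i c p, p ∈ Λ s i → p ∈ col c → p = pt s i c := fun s i c p hp hp' =>
    hMu _ (hΛl s i) _ (hcoll c) (hΛcol s i c) p ⟨hp, hp'⟩
  have hptaff : ∀ s i c, pt s i c ∉ linf := by
    intro s i c h
    by_cases hp : pt s i c = e s
    · exact hecol s c (hp ▸ hptcol s i c)
    · exact hΛlinf s i (lineU (hΛl s i) hlinfl hp (hptΛ s i c) (heΛ s i) h (heinl s))
  have hptdiag : ∀ s i, pt s i i = d i := fun s i =>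
    (hptuniq s i i (d i) (hdΛ s i) (hdcol i)).symm
  have colMeet : ∀ {p : P} {c c' : Fin κ}, p ∈ col c → p ∈ col c' → p ≠ a → c = c' := by
    intro p c c' hp hp' hpa
    have hcc : col c = col c' := lineU (hcoll c) (hcoll c') hpa hp (hacol c) hp' (hacol c')
    by_contra hne
    have hdd : d c ≠ d c' := fun h => hne (hdinj h)
    exact haσ (lineU (hcoll c) hσl hdd (hdcol c) (hcc ▸ hdcol c') (hdmem c) (hdmem c') ▸ hacol c)
  -- symbols
  obtain ⟨s0⟩ : Nonempty (Fin (κ - 1)) := ⟨⟨0, by omega⟩⟩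
  set e0 : P := e s0 with he0_def
  set sym : P → Fin κ := fun p => dInv (M (J e0 (M (J b p) (col one))) σ) with hsym_def
  -- key facts about q := M (J b p) (col one)
  have hqfacts : ∀ p, p ∉ linf →
      M (J b p) (col one) ∈ J b p ∧ M (J b p) (col one) ∈ col one ∧
      M (J b p) (col one) ∉ linf := by
    intro p hp
    have hbp : b ≠ p := fun h => hp (h ▸ hbinf)
    have hμl : J b p ∈ lines := hJl b p hbp
    have hμc : J b p ≠ col one := fun h => hWcol one (h ▸ hJp b p hbp)
    refine ⟨hMl _ hμl _ (hcoll one) hμc, hMr _ hμl _ (hcoll one) hμc, ?_⟩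
    intro h
    by_cases hq : M (J b p) (col one) = b
    · exact hWcol one (hq ▸ hMr _ hμl _ (hcoll one) hμc)
    · exact hp ((lineU hμl hlinfl hq (hMl _ hμl _ (hcoll one) hμc) (hJp b p hbp) h hbinf) ▸
        hJq b p hbp)
  -- z := M (J e0 q) σ facts, and d (sym p) = z
  have hzfacts : ∀ p, p ∉ linf →
      M (J e0 (M (J b p) (col one))) σ ∈ J e0 (M (J b p) (col one)) ∧
      M (J e0 (M (J b p) (col one))) σ ∈ σ ∧
      M (J e0 (M (J b p) (col one))) σ ≠ b ∧
      M (J e0 (M (J b p) (col one))) σ ∉ linf ∧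
      d (sym p) = M (J e0 (M (J b p) (col one))) σ := by
    intro p hp
    obtain ⟨hq1, hq2, hq3⟩ := hqfacts p hp
    set q := M (J b p) (col one)
    have heq : e0 ≠ q := fun h => hq3 (h ▸ heinl s0)
    have hνl : J e0 q ∈ lines := hJl e0 q heq
    have hνσ : J e0 q ≠ σ := fun h => hes s0 (h ▸ hJp e0 q heq)
    have hz1 : M (J e0 q) σ ∈ J e0 q := hMl _ hνl _ hσl hνσ
    have hz2 : M (J e0 q) σ ∈ σ := hMr _ hνl _ hσl hνσ
    have hz3 : M (J e0 q) σ ≠ b := by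
      intro h
      have hbν : b ∈ J e0 q := h ▸ hz1
      have : J e0 q = linf := lineU hνl hlinfl (heb s0) (hJp e0 q heq) hbν (heinl s0) hbinf
      exact hq3 (this ▸ hJq e0 q heq)
    have hz4 : M (J e0 q) σ ∉ linf := fun h =>
      hσne (lineU hσl hlinfl hz3 hz2 hbσ h hbinf)
    exact ⟨hz1, hz2, hz3, hz4, hdInv _ hz2 hz3⟩
  -- injectivity of sym across affine points: equal symbols means same line through b
  have symKey : ∀ p, p ∉ linf → ∀ p', p' ∉ linf → sym p = sym p' → p' ∈ J b p := by
    intro p hp p' hp' hsy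
    obtain ⟨hq1, hq2, hq3⟩ := hqfacts p hp
    obtain ⟨hq1', hq2', hq3'⟩ := hqfacts p' hp'
    obtain ⟨hz1, hz2, hz3, hz4, hz5⟩ := hzfacts p hp
    obtain ⟨hz1', hz2', hz3', hz4', hz5'⟩ := hzfacts p' hp'
    set q := M (J b p) (col one)
    set q' := M (J b p') (col one)
    have hzz : M (J e0 q) σ = M (J e0 q') σ := by rw [← hz5, ← hz5', hsy]
    have heq : e0 ≠ q := fun h => hq3 (h ▸ heinl s0)
    have heq' : e0 ≠ q' := fun h => hq3' (h ▸ heinl s0)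
    have hez : e0 ≠ M (J e0 q) σ := fun h => hz4 (h ▸ heinl s0)
    have hνν : J e0 q = J e0 q' :=
      lineU (hJl e0 q heq) (hJl e0 q' heq') hez (hJp e0 q heq) hz1
        (hJp e0 q' heq') (hzz ▸ hz1')
    have hνc : J e0 q ≠ col one := fun h => hecol s0 one (h ▸ hJp e0 q heq)
    have hqq : q = q' := by
      by_contra hne
      exact hecol s0 one
        ((lineU (hJl e0 q heq) (hcoll one) hne (hJq e0 q heq) (hνν.symm ▸ hJq e0 q' heq')
          hq2 hq2') ▸ hJp e0 q heq)
    have hbp : b ≠ p := fun h => hp (h ▸ hbinf)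
    have hbp' : b ≠ p' := fun h => hp' (h ▸ hbinf)
    have hqb : q ≠ b := fun h => hWcol one (h ▸ hq2)
    have : J b p' = J b p :=
      lineU (hJl b p' hbp') (hJl b p hbp) hqb.symm (hJp b p' hbp') (hqq ▸ hq1')
        (hJp b p hbp) hq1
    exact this ▸ hJq b p' hbp'
  -- symbol of a diagonal point
  have symdiag : ∀ i, sym (d i) = one := by
    intro i
    have hσbd : σ = J b (d i) := hJu b (d i) (hbd' i) σ ⟨hσl, hbσ, hdmem i⟩
    have hσcol : σ ≠ col one := fun h => haσ (h ▸ hacol one)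
    have hq : d one = M σ (col one) :=
      hMu _ hσl _ (hcoll one) hσcol (d one) ⟨hdmem one, hdcol one⟩
    have hed1 : e0 ≠ d one := hed s0 one
    have hνσ : J e0 (d one) ≠ σ := fun h => hes s0 (h ▸ hJp e0 (d one) hed1)
    have hz : d one = M (J e0 (d one)) σ :=
      hMu _ (hJl e0 (d one) hed1) _ hσl hνσ (d one) ⟨hJq e0 (d one) hed1, hdmem one⟩
    show dInv (M (J e0 (M (J b (d i)) (col one))) σ) = one
    rw [← hσbd, ← hq, ← hz, hdInvd]
  -- the mutually projective squares
  have hpair : ∀ s t, e s ≠ e t → ∀ i j, ∃! c, sym (pt s i c) = sym (pt t j c) := by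
    intro s t hst i j
    have hΛne : Λ s i ≠ Λ t j := hΛΛ hst
    set q := M (Λ s i) (Λ t j) with hq_def
    have hq1 : q ∈ Λ s i := hMl _ (hΛl s i) _ (hΛl t j) hΛne
    have hq2 : q ∈ Λ t j := hMr _ (hΛl s i) _ (hΛl t j) hΛne
    have hqaff : q ∉ linf := by
      intro h
      by_cases hqe : q = e s
      · by_cases hqe' : q = e t
        · exact hst (hqe ▸ hqe' ▸ rfl)
        · exact hΛlinf t j (lineU (hΛl t j) hlinfl hqe' hq2 (heΛ t j) h (heinl t))
      · exact hΛlinf s i (lineU (hΛl s i) hlinfl hqe hq1 (heΛ s i) h (heinl s))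
    have haq : a ≠ q := fun h => hqaff (h ▸ hainf)
    have hJaqσ : J a q ≠ σ := fun h => haσ (h ▸ hJp a q haq)
    have hr1 : M (J a q) σ ∈ J a q := hMl _ (hJl a q haq) _ hσl hJaqσ
    have hr2 : M (J a q) σ ∈ σ := hMr _ (hJl a q haq) _ hσl hJaqσ
    have hr3 : M (J a q) σ ≠ b := by
      intro h
      have hbJ : b ∈ J a q := h ▸ hr1
      have : J a q = linf := lineU (hJl a q haq) hlinfl hab (hJp a q haq) hbJ hainf hbinf
      exact hqaff (this ▸ hJq a q haq)
    set c := dInv (M (J a q) σ) with hc_def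
    have hdc : d c = M (J a q) σ := hdInv _ hr2 hr3
    have har : a ≠ M (J a q) σ := fun h => haσ (h.symm ▸ hr2)
    have hqcol : q ∈ col c := by
      have : col c = J a q := by
        rw [hcol_def]
        simp only
        rw [hdc]
        exact lineU (hJl a (M (J a q) σ) har) (hJl a q haq) har (hJp a _ har) (hJq a _ har)
          (hJp a q haq) hr1
      exact this ▸ hJq a q haq
    have hpts : pt s i c = q := (hptuniq s i c q hq1 hqcol).symm
    have hptt : pt t j c = q := (hptuniq t j c q hq2 hqcol).symm
    refine ⟨c, ?_, ?_⟩
    · show sym (pt s i c) = sym (pt t j c)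
      rw [hpts, hptt]
    intro c' h'
    have hps := hptaff s i c'
    have hpt := hptaff t j c'
    have hpp : pt s i c' = pt t j c' := by
      by_contra hne
      have hmem := symKey _ hps _ hpt h'
      have hbp : b ≠ pt s i c' := fun h => hps (h ▸ hbinf)
      have : J b (pt s i c') = col c' :=
        lineU (hJl b _ hbp) (hcoll c') hne (hJq b _ hbp) hmem (hptcol s i c') (hptcol t j c')
      exact hWcol c' (this ▸ hJp b _ hbp)
    have : pt s i c' = q := hMu _ (hΛl s i) _ (hΛl t j) hΛne _ ⟨hptΛ s i c', hpp ▸ hptΛ t j c'⟩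
    exact colMeet (this ▸ hptcol s i c' : q ∈ col c') hqcol haq.symm
  refine ⟨fun s i c => sym (pt s i c), ?_, ?_, ?_, ?_⟩
  · -- injectivity
    intro s t h
    by_contra hst
    have hest : e s ≠ e t := fun hh => hst (heinj hh)
    obtain ⟨c, -, hu⟩ := hpair s t hest ⟨0, by omega⟩ ⟨0, by omega⟩
    have hL : ∀ i c', sym (pt s i c') = sym (pt t i c') := fun i c' =>
      congrFun (congrFun h i) c'
    have h0 : (⟨0, by omega⟩ : Fin κ) = c := hu _ (hL _ _)
    have h1 : (⟨1, by omega⟩ : Fin κ) = c := hu _ (hL _ _)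
    have h01 := h0.trans h1.symm
    simp [Fin.ext_iff] at h01
  · -- Latin squares
    intro s
    constructor
    · intro i
      rw [← Finite.injective_iff_bijective]
      intro c c' hcc
      by_contra hne
      have hp := hptaff s i c
      have hp' := hptaff s i c'
      by_cases hpp : pt s i c = pt s i c'
      · exact hne (colMeet (hptcol s i c) (hpp ▸ hptcol s i c')
          (fun h => hp (h ▸ hainf)))
      · have hmem := symKey _ hp _ hp' hcc
        have hbp : b ≠ pt s i c := fun h => hp (h ▸ hbinf)
        have : J b (pt s i c) = Λ s i :=
          lineU (hJl b _ hbp) (hΛl s i) hpp (hJq b _ hbp) hmem (hptΛ s i c) (hptΛ s i c')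
        have hbΛ : b ∈ Λ s i := this ▸ hJp b _ hbp
        exact hΛlinf s i
          (lineU (hΛl s i) hlinfl (heb s) (heΛ s i) hbΛ (heinl s) hbinf)
    · intro c
      rw [← Finite.injective_iff_bijective]
      intro i i' hii
      by_contra hne
      have hp := hptaff s i c
      have hp' := hptaff s i' c
      by_cases hpp : pt s i c = pt s i' c
      · have hpe : pt s i c ≠ e s := fun h => hp (h ▸ heinl s)
        exact hΛsame hne (lineU (hΛl s i) (hΛl s i') hpe (hptΛ s i c) (heΛ s i)
          (hpp ▸ hptΛ s i' c) (heΛ s i'))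
      · have hmem := symKey _ hp _ hp' hii
        have hbp : b ≠ pt s i c := fun h => hp (h ▸ hbinf)
        have : J b (pt s i c) = col c :=
          lineU (hJl b _ hbp) (hcoll c) hpp (hJq b _ hbp) hmem (hptcol s i c) (hptcol s i' c)
        exact hWcol c (this ▸ hJp b _ hbp)
  · -- diagonal
    intro s i
    show sym (pt s i i) = _
    rw [hptdiag, symdiag i]
    exact Fin.ext hone
  · -- projective pairs
    intro s t hst
    exact hpair s t (fun h => hst (heinj h))
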